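/- Let H be a maximal proper additive subgroup of Λ_s satisfying 2Λ_s + H = Λ_s, and let p : Φ̊ → Y be ℤ-linear with p(α) ∈ Λ_s for every α ∈ Φ̊_s and p(α) ∈ Λ_ℓ for every α ∈ Φ̊_ℓ. Then Ψ := {(α, p(α)+h) : α ∈ Φ̊_s, h ∈ H} ∪ {(α, μ) : α ∈ Φ̊_ℓ, μ ∈ (p(α)+H) ∩ Λ_ℓ} is a maximal root subsystem of Φ. -/

import Mathlib

open RealInnerProductSpace

noncomputable section

/-- The standard basis vector `e i` of `ℝ^n`. -/
def ee (n : ℕ) (i : Fin n) : EuclideanSpace ℝ (Fin n) := EuclideanSpace.single i 1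

/-- The set `{±e_i : 1 ≤ i ≤ n}`. -/
def pmE (n : ℕ) : Set (EuclideanSpace ℝ (Fin n)) :=
  {v | ∃ i : Fin n, v = ee n i ∨ v = -ee n i}

/-- The set `{±e_i ± e_j : i ≠ j}`. -/
def pmEE (n : ℕ) : Set (EuclideanSpace ℝ (Fin n)) :=
  {v | ∃ i j : Fin n, i ≠ j ∧ ∃ ε δ : ℝ, (ε = 1 ∨ ε = -1) ∧ (δ = 1 ∨ δ = -1) ∧
    v = ε • ee n i + δ • ee n j}

/-- The set `{±2e_i : 1 ≤ i ≤ n}`. -/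
def pm2E (n : ℕ) : Set (EuclideanSpace ℝ (Fin n)) :=
  {v | ∃ i : Fin n, v = (2 : ℝ) • ee n i ∨ v = -((2 : ℝ) • ee n i)}

/-- The reflection `s_α(β) = β − (2⟨β,α⟩/⟨α,α⟩)α`. -/
def reflV {V : Type*} [NormedAddCommGroup V] [InnerProductSpace ℝ V] (α β : V) : V :=
  β - (2 * ⟪β, α⟫ / ⟪α, α⟫) • α

/-- A root subsystem of `Φ` (w.r.t. a given reflection map): a nonempty subset of `Φ`
closed under the reflections in its own elements. -/
def IsRootSubsystem {X : Type*} (refl : X → X → X) (Φ Ψ : Set X) : Prop :=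
  Ψ.Nonempty ∧ Ψ ⊆ Φ ∧ ∀ a ∈ Ψ, ∀ b ∈ Ψ, refl a b ∈ Ψ

/-- A maximal root subsystem of `Φ`: a proper root subsystem such that every root
subsystem `Ψ'` with `Ψ ⊆ Ψ' ≠ Φ` equals `Ψ`. -/
def IsMaximalRootSubsystem {X : Type*} (refl : X → X → X) (Φ Ψ : Set X) : Prop :=
  IsRootSubsystem refl Φ Ψ ∧ Ψ ≠ Φ ∧
    ∀ Ψ' : Set X, IsRootSubsystem refl Φ Ψ' → Ψ ⊆ Ψ' → Ψ' ≠ Φ → Ψ' = Ψ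

/-- The affine reflection `s_a(b) = b − (2⟨b₁,a₁⟩/⟨a₁,a₁⟩)·a` on `V × Y`. -/
def reflA {V Y : Type*} [NormedAddCommGroup V] [InnerProductSpace ℝ V]
    [AddCommGroup Y] [Module ℝ Y] (a b : V × Y) : V × Y :=
  b - (2 * ⟪b.1, a.1⟫ / ⟪a.1, a.1⟫) • a

/-- `p : Φ̊ → Y` is ℤ-linear: `p(s_α(β)) = p(β) − (2⟨β,α⟩/⟨α,α⟩)·p(α)` for `α, β ∈ Φ̊`. -/
def IsZLin {V Y : Type*} [NormedAddCommGroup V] [InnerProductSpace ℝ V]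
    [AddCommGroup Y] [Module ℝ Y] (Φ₀ : Set V) (p : V → Y) : Prop :=
  ∀ α ∈ Φ₀, ∀ β ∈ Φ₀, p (reflV α β) = p β - (2 * ⟪β, α⟫ / ⟪α, α⟫) • p α


abbrev PM (a : ℝ) : Prop := a = 1 ∨ a = -1

lemma PM.one : PM 1 := Or.inl rfl
lemma PM.mone : PM (-1) := Or.inr rfl
lemma PM.mul {a b : ℝ} (ha : PM a) (hb : PM b) : PM (a*b) := by
  rcases ha with rfl|rfl <;> rcases hb with rfl|rfl <;> norm_num [PM]
lemma PM.neg {a : ℝ} (ha : PM a) : PM (-a) := by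
  rcases ha with rfl|rfl <;> norm_num [PM]
lemma PM.sq {a : ℝ} (ha : PM a) : a*a = 1 := by rcases ha with rfl|rfl <;> norm_num
lemma PM.eq_or_neg {a b : ℝ} (ha : PM a) (hb : PM b) : b = a ∨ b = -a := by
  rcases ha with rfl|rfl <;> rcases hb with rfl|rfl <;> norm_num

lemma inner_ee (n : ℕ) (i j : Fin n) : ⟪ee n i, ee n j⟫ = if i = j then (1:ℝ) else 0 := by
  simp [ee, EuclideanSpace.inner_single_left, EuclideanSpace.single_apply, eq_comm]

lemma inner_comb {n : ℕ} (ε δ ε' δ' : ℝ) (i j k l : Fin n) :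
    ⟪ε • ee n i + δ • ee n j, ε' • ee n k + δ' • ee n l⟫ =
      ε*ε'*(if i = k then 1 else 0) + ε*δ'*(if i = l then 1 else 0)
      + δ*ε'*(if j = k then 1 else 0) + δ*δ'*(if j = l then 1 else 0) := by
  simp only [inner_add_left, inner_add_right, real_inner_smul_left, real_inner_smul_right,
    inner_ee]
  ring

lemma inner_comb1 {n : ℕ} (a b c : ℝ) (i j k : Fin n) :
    ⟪a • ee n i + b • ee n j, c • ee n k⟫ =
      a*c*(if i = k then 1 else 0) + b*c*(if j = k then 1 else 0) := by
  simp only [inner_add_left, real_inner_smul_left, real_inner_smul_right, inner_ee]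
  ring

lemma inner_comb1' {n : ℕ} (a b c : ℝ) (i j k : Fin n) :
    ⟪c • ee n k, a • ee n i + b • ee n j⟫ =
      a*c*(if i = k then 1 else 0) + b*c*(if j = k then 1 else 0) := by
  rw [real_inner_comm]; exact inner_comb1 a b c i j k

lemma inner_comb0 {n : ℕ} (a b : ℝ) (i j : Fin n) :
    ⟪a • ee n i, b • ee n j⟫ = a*b*(if i = j then 1 else 0) := by
  simp only [real_inner_smul_left, real_inner_smul_right, inner_ee]
  ring

lemma mem_pmEE {n : ℕ} {i j : Fin n} (hij : i ≠ j) {ε δ : ℝ} (hε : PM ε) (hδ : PM δ) :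
    ε • ee n i + δ • ee n j ∈ pmEE n := ⟨i, j, hij, ε, δ, hε, hδ, rfl⟩

lemma mem_pm2E {n : ℕ} (i : Fin n) {s : ℝ} (hs : PM s) : (2*s) • ee n i ∈ pm2E n := by
  rcases hs with rfl|rfl
  · exact ⟨i, Or.inl (by norm_num)⟩
  · exact ⟨i, Or.inr (by norm_num [neg_smul])⟩

lemma pm2E_repr {n : ℕ} {β : EuclideanSpace ℝ (Fin n)} (hβ : β ∈ pm2E n) :
    ∃ i : Fin n, ∃ s : ℝ, PM s ∧ β = (2*s) • ee n i := by
  obtain ⟨i, h|h⟩ := hβ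
  · exact ⟨i, 1, PM.one, by rw [h]; norm_num⟩
  · exact ⟨i, -1, PM.mone, by rw [h]; norm_num [neg_smul]⟩

lemma normSq_short {n : ℕ} {i j : Fin n} (hij : i ≠ j) {ε δ : ℝ} (hε : PM ε) (hδ : PM δ) :
    ⟪ε • ee n i + δ • ee n j, ε • ee n i + δ • ee n j⟫ = 2 := by
  rw [inner_comb]
  rcases hε with rfl|rfl <;> rcases hδ with rfl|rfl <;> simp [hij, Ne.symm hij]
  all_goals norm_num

lemma normSq_long {n : ℕ} (i : Fin n) {s : ℝ} (hs : PM s) :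
    ⟪(2*s) • ee n i, (2*s) • ee n i⟫ = 4 := by
  rw [inner_comb0]
  rcases hs with rfl|rfl <;> norm_num

lemma normSq_short' {n : ℕ} {α : EuclideanSpace ℝ (Fin n)} (hα : α ∈ pmEE n) : ⟪α,α⟫ = 2 := by
  obtain ⟨i,j,hij,ε,δ,hε,hδ,rfl⟩ := hα; exact normSq_short hij hε hδ

lemma normSq_long' {n : ℕ} {α : EuclideanSpace ℝ (Fin n)} (hα : α ∈ pm2E n) : ⟪α,α⟫ = 4 := by
  obtain ⟨i,s,hs,rfl⟩ := pm2E_repr hα; exact normSq_long i hs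

lemma short_not_long {n : ℕ} {α : EuclideanSpace ℝ (Fin n)} (hα : α ∈ pmEE n) :
    α ∉ pm2E n := by
  intro h2
  have := normSq_short' hα
  have := normSq_long' h2
  linarith

lemma reflV_orth {V : Type*} [NormedAddCommGroup V] [InnerProductSpace ℝ V] {α β : V}
    (h : ⟪β, α⟫ = 0) : reflV α β = β := by
  simp [reflV, h]


lemma cartan_ss_core {n : ℕ} (i j l : Fin n) (hij : i ≠ j) (hli : l ≠ i)
    {ε δ ε' δ' : ℝ} (hε : PM ε) (hδ : PM δ) (hε' : PM ε') (hδ' : PM δ')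
    (h0 : ⟪ε' • ee n i + δ' • ee n l, ε • ee n i + δ • ee n j⟫ ≠ 0) :
    ∃ k : ℤ, 2*⟪ε' • ee n i + δ' • ee n l, ε • ee n i + δ • ee n j⟫
        /⟪ε • ee n i + δ • ee n j, ε • ee n i + δ • ee n j⟫ = (k:ℝ) ∧
      reflV (ε • ee n i + δ • ee n j) (ε' • ee n i + δ' • ee n l) ∈ pmEE n := by
  have hαα := normSq_short hij hε hδ
  by_cases hlj : l = j
  · subst hlj
    have hm : ⟪ε' • ee n i + δ' • ee n l, ε • ee n i + δ • ee n l⟫ = ε'*ε + δ'*δ := by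
      rw [inner_comb]; simp [hij, Ne.symm hij]
    have hds : δ'*δ = ε'*ε := by
      rcases hε with rfl|rfl <;> rcases hδ with rfl|rfl <;> rcases hε' with rfl|rfl <;>
        rcases hδ' with rfl|rfl <;>
        first
          | (norm_num; done)
          | (exfalso; apply h0; rw [hm]; norm_num)
    rcases PM.eq_or_neg hε hε' with he|he
    · subst he
      have hd : δ' = δ := by
        have h1 : δ'*δ = 1 := by rw [hds, (PM.sq hε')]
        rcases hδ with rfl|rfl <;> rcases hδ' with rfl|rfl <;> linarith
      subst hd
      have hm2 : ⟪ε' • ee n i + δ' • ee n l, ε' • ee n i + δ' • ee n l⟫ = 2 := by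
        rw [hm, (PM.sq hε'), (PM.sq hδ')]; norm_num
      refine ⟨2, by rw [hm2]; norm_num, ?_⟩
      have hv : reflV (ε' • ee n i + δ' • ee n l) (ε' • ee n i + δ' • ee n l)
          = (-ε') • ee n i + (-δ') • ee n l := by
        simp only [reflV]; rw [hm2]; module
      rw [hv]; exact mem_pmEE hij (PM.neg hε') (PM.neg hδ')
    · subst he
      have hd : δ' = -δ := by
        have h1 : δ'*δ = -1 := by rw [hds, neg_mul, (PM.sq hε)]
        rcases hδ with rfl|rfl <;> rcases hδ' with rfl|rfl <;> linarith
      subst hd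
      have hm2 : ⟪(-ε) • ee n i + (-δ) • ee n l, ε • ee n i + δ • ee n l⟫ = -2 := by
        rw [hm, neg_mul, neg_mul, (PM.sq hε), (PM.sq hδ)]; norm_num
      refine ⟨-2, by rw [hm2, hαα]; norm_num, ?_⟩
      have hv : reflV (ε • ee n i + δ • ee n l) ((-ε) • ee n i + (-δ) • ee n l)
          = ε • ee n i + δ • ee n l := by
        simp only [reflV]; rw [hm2, hαα]; module
      rw [hv]; exact mem_pmEE hij hε hδ
  · have hm : ⟪ε' • ee n i + δ' • ee n l, ε • ee n i + δ • ee n j⟫ = ε'*ε := by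
      rw [inner_comb]; simp [hij, Ne.symm hij, hli, hlj]
    rcases PM.eq_or_neg hε hε' with he|he
    · subst he
      have hm2 : ⟪ε' • ee n i + δ' • ee n l, ε' • ee n i + δ • ee n j⟫ = 1 := by
        rw [hm, (PM.sq hε')]
      refine ⟨1, by rw [hm2, hαα]; norm_num, ?_⟩
      have hv : reflV (ε' • ee n i + δ • ee n j) (ε' • ee n i + δ' • ee n l)
          = (-δ) • ee n j + δ' • ee n l := by
        simp only [reflV]; rw [hm2, hαα]; module
      rw [hv]; exact mem_pmEE (fun h => hlj h.symm) (PM.neg hδ) hδ'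
    · subst he
      have hm2 : ⟪(-ε) • ee n i + δ' • ee n l, ε • ee n i + δ • ee n j⟫ = -1 := by
        rw [hm, neg_mul, (PM.sq hε)]
      refine ⟨-1, by rw [hm2, hαα]; norm_num, ?_⟩
      have hv : reflV (ε • ee n i + δ • ee n j) ((-ε) • ee n i + δ' • ee n l)
          = δ • ee n j + δ' • ee n l := by
        simp only [reflV]; rw [hm2, hαα]; module
      rw [hv]; exact mem_pmEE (fun h => hlj h.symm) hδ hδ'

lemma cartan_ss {n : ℕ} {α β : EuclideanSpace ℝ (Fin n)} (hα : α ∈ pmEE n) (hβ : β ∈ pmEE n) :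
    ∃ k : ℤ, 2*⟪β,α⟫/⟪α,α⟫ = (k:ℝ) ∧ reflV α β ∈ pmEE n := by
  obtain ⟨i,j,hij,ε,δ,hε,hδ,rfl⟩ := hα
  obtain ⟨k,l,hkl,ε',δ',hε',hδ',rfl⟩ := hβ
  by_cases h0 : ⟪(ε':ℝ) • ee n k + δ' • ee n l, ε • ee n i + δ • ee n j⟫ = 0
  · exact ⟨0, by rw [h0]; norm_num, by rw [reflV_orth h0]; exact mem_pmEE hkl hε' hδ'⟩
  by_cases hki : k = i
  · subst hki
    exact cartan_ss_core k j l hij (Ne.symm hkl) hε hδ hε' hδ' h0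
  by_cases hli : l = i
  · subst hli
    have hcomm : (ε':ℝ) • ee n k + δ' • ee n l = δ' • ee n l + ε' • ee n k := add_comm _ _
    rw [hcomm] at h0 ⊢
    exact cartan_ss_core l j k hij hkl hε hδ hδ' hε' h0
  by_cases hkj : k = j
  · subst hkj
    have hcomm : (ε:ℝ) • ee n i + δ • ee n k = δ • ee n k + ε • ee n i := add_comm _ _
    rw [hcomm] at h0 ⊢
    exact cartan_ss_core k i l hki (Ne.symm hkl) hδ hε hε' hδ' h0
  by_cases hlj : l = j
  · subst hlj
    have hc1 : (ε:ℝ) • ee n i + δ • ee n l = δ • ee n l + ε • ee n i := add_comm _ _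
    have hc2 : (ε':ℝ) • ee n k + δ' • ee n l = δ' • ee n l + ε' • ee n k := add_comm _ _
    rw [hc1, hc2] at h0 ⊢
    exact cartan_ss_core l i k (Ne.symm hij) hkl hδ hε hδ' hε' h0
  · exfalso; apply h0; rw [inner_comb]; simp [hki, hkj, hli, hlj]

lemma cartan_sl {n : ℕ} {α β : EuclideanSpace ℝ (Fin n)} (hα : α ∈ pmEE n) (hβ : β ∈ pm2E n) :
    ∃ k : ℤ, 2*⟪β,α⟫/⟪α,α⟫ = ((2*k : ℤ):ℝ) ∧ reflV α β ∈ pm2E n := by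
  obtain ⟨i,j,hij,ε,δ,hε,hδ,rfl⟩ := hα
  obtain ⟨m,s,hs,rfl⟩ := pm2E_repr hβ
  have hαα := normSq_short hij hε hδ
  by_cases hmi : m = i
  · subst hmi
    have hm : ⟪(2*s) • ee n m, ε • ee n m + δ • ee n j⟫ = 2*s*ε := by
      rw [inner_comb1']; simp [Ne.symm hij]; ring
    have hv : reflV (ε • ee n m + δ • ee n j) ((2*s) • ee n m)
        = (2*(-(s*ε*δ))) • ee n j := by
      simp only [reflV]; rw [hm, hαα]
      match_scalars <;> first | ring1 | linear_combination (-2*s)*(PM.sq hε)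
    rcases PM.mul hs hε with hp|hp
    · refine ⟨1, ?_, ?_⟩
      · rw [hm, hαα]
        have : (2:ℝ)*(2*s*ε)/2 = 2*(s*ε) := by ring
        rw [this, hp]; norm_num
      · rw [hv]; exact mem_pm2E j (PM.neg (PM.mul (PM.mul hs hε) hδ))
    · refine ⟨-1, ?_, ?_⟩
      · rw [hm, hαα]
        have : (2:ℝ)*(2*s*ε)/2 = 2*(s*ε) := by ring
        rw [this, hp]; norm_num
      · rw [hv]; exact mem_pm2E j (PM.neg (PM.mul (PM.mul hs hε) hδ))
  by_cases hmj : m = j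
  · subst hmj
    have hm : ⟪(2*s) • ee n m, ε • ee n i + δ • ee n m⟫ = 2*s*δ := by
      rw [inner_comb1']; simp [hij]; ring
    have hv : reflV (ε • ee n i + δ • ee n m) ((2*s) • ee n m)
        = (2*(-(s*δ*ε))) • ee n i := by
      simp only [reflV]; rw [hm, hαα]
      match_scalars <;> first | ring1 | linear_combination (-2*s)*(PM.sq hδ)
    rcases PM.mul hs hδ with hp|hp
    · refine ⟨1, ?_, ?_⟩
      · rw [hm, hαα]
        have : (2:ℝ)*(2*s*δ)/2 = 2*(s*δ) := by ring
        rw [this, hp]; norm_num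
      · rw [hv]; exact mem_pm2E i (PM.neg (PM.mul (PM.mul hs hδ) hε))
    · refine ⟨-1, ?_, ?_⟩
      · rw [hm, hαα]
        have : (2:ℝ)*(2*s*δ)/2 = 2*(s*δ) := by ring
        rw [this, hp]; norm_num
      · rw [hv]; exact mem_pm2E i (PM.neg (PM.mul (PM.mul hs hδ) hε))
  · have hm0 : ⟪(2*s) • ee n m, ε • ee n i + δ • ee n j⟫ = 0 := by
      rw [inner_comb1']; simp [Ne.symm hmi, Ne.symm hmj]
    exact ⟨0, by rw [hm0]; norm_num, by rw [reflV_orth hm0]; exact mem_pm2E m hs⟩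

lemma cartan_ls {n : ℕ} {α β : EuclideanSpace ℝ (Fin n)} (hα : α ∈ pm2E n) (hβ : β ∈ pmEE n) :
    ∃ k : ℤ, 2*⟪β,α⟫/⟪α,α⟫ = (k:ℝ) ∧ reflV α β ∈ pmEE n := by
  obtain ⟨m,s,hs,rfl⟩ := pm2E_repr hα
  obtain ⟨k,l,hkl,ε',δ',hε',hδ',rfl⟩ := hβ
  have hαα := normSq_long m hs
  by_cases hkm : k = m
  · subst hkm
    have hm : ⟪ε' • ee n k + δ' • ee n l, (2*s) • ee n k⟫ = ε'*(2*s) := by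
      rw [inner_comb1]; simp [Ne.symm hkl]
    have hv : reflV ((2*s) • ee n k) (ε' • ee n k + δ' • ee n l)
        = (-ε') • ee n k + δ' • ee n l := by
      simp only [reflV]; rw [hm, hαα]
      match_scalars <;> first | ring1 | linear_combination (-2*ε')*(PM.sq hs)
    rcases PM.mul hs hε' with hp|hp
    · refine ⟨1, ?_, ?_⟩
      · rw [hm, hαα]
        have : (2:ℝ)*(ε'*(2*s))/4 = s*ε' := by ring
        rw [this, hp]; norm_num
      · rw [hv]; exact mem_pmEE hkl (PM.neg hε') hδ'
    · refine ⟨-1, ?_, ?_⟩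
      · rw [hm, hαα]
        have : (2:ℝ)*(ε'*(2*s))/4 = s*ε' := by ring
        rw [this, hp]; norm_num
      · rw [hv]; exact mem_pmEE hkl (PM.neg hε') hδ'
  by_cases hlm : l = m
  · subst hlm
    have hm : ⟪ε' • ee n k + δ' • ee n l, (2*s) • ee n l⟫ = δ'*(2*s) := by
      rw [inner_comb1]; simp [hkl]
    have hv : reflV ((2*s) • ee n l) (ε' • ee n k + δ' • ee n l)
        = ε' • ee n k + (-δ') • ee n l := by
      simp only [reflV]; rw [hm, hαα]
      match_scalars <;> first | ring1 | linear_combination (-2*δ')*(PM.sq hs)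
    rcases PM.mul hs hδ' with hp|hp
    · refine ⟨1, ?_, ?_⟩
      · rw [hm, hαα]
        have : (2:ℝ)*(δ'*(2*s))/4 = s*δ' := by ring
        rw [this, hp]; norm_num
      · rw [hv]; exact mem_pmEE hkl hε' (PM.neg hδ')
    · refine ⟨-1, ?_, ?_⟩
      · rw [hm, hαα]
        have : (2:ℝ)*(δ'*(2*s))/4 = s*δ' := by ring
        rw [this, hp]; norm_num
      · rw [hv]; exact mem_pmEE hkl hε' (PM.neg hδ')
  · have hm0 : ⟪ε' • ee n k + δ' • ee n l, (2*s) • ee n m⟫ = 0 := by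
      rw [inner_comb1]; simp [hkm, hlm]
    exact ⟨0, by rw [hm0]; norm_num, by rw [reflV_orth hm0]; exact mem_pmEE hkl hε' hδ'⟩

lemma cartan_ll {n : ℕ} {α β : EuclideanSpace ℝ (Fin n)} (hα : α ∈ pm2E n) (hβ : β ∈ pm2E n) :
    ∃ k : ℤ, 2*⟪β,α⟫/⟪α,α⟫ = ((2*k : ℤ):ℝ) ∧ reflV α β ∈ pm2E n := by
  obtain ⟨m,s,hs,rfl⟩ := pm2E_repr hα
  obtain ⟨k,s',hs',rfl⟩ := pm2E_repr hβ
  have hαα := normSq_long m hs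
  by_cases hkm : k = m
  · subst hkm
    have hm : ⟪(2*s') • ee n k, (2*s) • ee n k⟫ = 2*s'*(2*s) := by
      rw [inner_comb0]; simp
    have hv : reflV ((2*s) • ee n k) ((2*s') • ee n k) = (2*(-s')) • ee n k := by
      simp only [reflV]; rw [hm, hαα]
      match_scalars <;> first | ring1 | linear_combination (-4*s')*(PM.sq hs)
    rcases PM.mul hs' hs with hp|hp
    · refine ⟨1, ?_, ?_⟩
      · rw [hm, hαα]
        have : (2:ℝ)*(2*s'*(2*s))/4 = 2*(s'*s) := by ring
        rw [this, hp]; norm_num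
      · rw [hv]; exact mem_pm2E k (PM.neg hs')
    · refine ⟨-1, ?_, ?_⟩
      · rw [hm, hαα]
        have : (2:ℝ)*(2*s'*(2*s))/4 = 2*(s'*s) := by ring
        rw [this, hp]; norm_num
      · rw [hv]; exact mem_pm2E k (PM.neg hs')
  · have hm0 : ⟪(2*s') • ee n k, (2*s) • ee n m⟫ = 0 := by
      rw [inner_comb0]; simp [hkm]
    exact ⟨0, by rw [hm0]; norm_num, by rw [reflV_orth hm0]; exact mem_pm2E k hs'⟩


lemma exists_fresh {n : ℕ} (hn : 3 ≤ n) (i j : Fin n) : ∃ m : Fin n, m ≠ i ∧ m ≠ j := by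
  by_contra h
  push_neg at h
  have hsub : (Finset.univ : Finset (Fin n)) ⊆ {i, j} := by
    intro m _
    simp only [Finset.mem_insert, Finset.mem_singleton]
    by_cases hmi : m = i
    · exact Or.inl hmi
    · exact Or.inr (h m hmi)
  have h1 : (Finset.univ : Finset (Fin n)).card ≤ ({i, j} : Finset (Fin n)).card :=
    Finset.card_le_card hsub
  have h2 : ({i, j} : Finset (Fin n)).card ≤ 2 := Finset.card_insert_le _ _ |>.trans (by simp)
  simp [Finset.card_univ] at h1
  omega

lemma mv_id {n : ℕ} {i j m : Fin n} (hmi : m ≠ i) (hmj : m ≠ j) (ε δ : ℝ) :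
    reflV ((2*(1:ℝ)) • ee n m) (ε • ee n i + δ • ee n j) = ε • ee n i + δ • ee n j := by
  apply reflV_orth
  rw [inner_comb1]; simp [Ne.symm hmi, Ne.symm hmj]

lemma mv_flip1 {n : ℕ} {i j : Fin n} (hij : i ≠ j) {ε : ℝ} (hε : PM ε) (δ : ℝ) :
    reflV ((2*(1:ℝ)) • ee n i) (ε • ee n i + δ • ee n j) = (-ε) • ee n i + δ • ee n j := by
  have hm : ⟪ε • ee n i + δ • ee n j, (2*(1:ℝ)) • ee n i⟫ = 2*ε := by
    rw [inner_comb1]; simp [Ne.symm hij]; ring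
  have hαα : ⟪(2*(1:ℝ)) • ee n i, (2*(1:ℝ)) • ee n i⟫ = 4 := normSq_long i PM.one
  simp only [reflV]; rw [hm, hαα]
  match_scalars <;> ring1

lemma mv_flip2 {n : ℕ} {i j : Fin n} (hij : i ≠ j) (ε : ℝ) {δ : ℝ} (hδ : PM δ) :
    reflV ((2*(1:ℝ)) • ee n j) (ε • ee n i + δ • ee n j) = ε • ee n i + (-δ) • ee n j := by
  have hm : ⟪ε • ee n i + δ • ee n j, (2*(1:ℝ)) • ee n j⟫ = 2*δ := by
    rw [inner_comb1]; simp [hij]; ring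
  have hαα : ⟪(2*(1:ℝ)) • ee n j, (2*(1:ℝ)) • ee n j⟫ = 4 := normSq_long j PM.one
  simp only [reflV]; rw [hm, hαα]
  match_scalars <;> ring1

lemma mv_move1 {n : ℕ} {i j k : Fin n} (hij : i ≠ j) (hki : k ≠ i) (hkj : k ≠ j)
    {ε a : ℝ} (hε : PM ε) (ha : PM a) (δ : ℝ) :
    reflV (ε • ee n i + (-a) • ee n k) (ε • ee n i + δ • ee n j)
      = a • ee n k + δ • ee n j := by
  have hm : ⟪ε • ee n i + δ • ee n j, ε • ee n i + (-a) • ee n k⟫ = 1 := by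
    rw [inner_comb]; simp [Ne.symm hki, Ne.symm hij, Ne.symm hkj, PM.sq hε]
  have hαα : ⟪ε • ee n i + (-a) • ee n k, ε • ee n i + (-a) • ee n k⟫ = 2 :=
    normSq_short (Ne.symm hki) hε (PM.neg ha)
  simp only [reflV]; rw [hm, hαα]
  match_scalars <;> ring1

lemma mv_move2 {n : ℕ} {i j k : Fin n} (hij : i ≠ j) (hki : k ≠ i) (hkj : k ≠ j)
    {δ a : ℝ} (hδ : PM δ) (ha : PM a) (ε : ℝ) :
    reflV (δ • ee n j + (-a) • ee n k) (ε • ee n i + δ • ee n j)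
      = ε • ee n i + a • ee n k := by
  have hm : ⟪ε • ee n i + δ • ee n j, δ • ee n j + (-a) • ee n k⟫ = 1 := by
    rw [inner_comb]; simp [hij, Ne.symm hki, Ne.symm hkj, PM.sq hδ]
  have hαα : ⟪δ • ee n j + (-a) • ee n k, δ • ee n j + (-a) • ee n k⟫ = 2 :=
    normSq_short (Ne.symm hkj) hδ (PM.neg ha)
  simp only [reflV]; rw [hm, hαα]
  match_scalars <;> ring1

lemma adjust1_first {n : ℕ} (hn : 3 ≤ n) {i j : Fin n} (hij : i ≠ j) {ε ε' : ℝ}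
    (hε : PM ε) (hε' : PM ε') (δ : ℝ) :
    ∃ γ ∈ pmEE n ∪ pm2E n, reflV γ (ε • ee n i + δ • ee n j) = ε' • ee n i + δ • ee n j := by
  rcases PM.eq_or_neg hε hε' with he|he
  · subst he
    obtain ⟨m, hmi, hmj⟩ := exists_fresh hn i j
    exact ⟨(2*(1:ℝ)) • ee n m, Or.inr (mem_pm2E m PM.one), mv_id hmi hmj _ _⟩
  · subst he
    exact ⟨(2*(1:ℝ)) • ee n i, Or.inr (mem_pm2E i PM.one), mv_flip1 hij hε _⟩

lemma adjust1_second {n : ℕ} (hn : 3 ≤ n) {i j : Fin n} (hij : i ≠ j) {δ δ' : ℝ}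
    (hδ : PM δ) (hδ' : PM δ') (ε : ℝ) :
    ∃ γ ∈ pmEE n ∪ pm2E n, reflV γ (ε • ee n i + δ • ee n j) = ε • ee n i + δ' • ee n j := by
  rcases PM.eq_or_neg hδ hδ' with he|he
  · subst he
    obtain ⟨m, hmi, hmj⟩ := exists_fresh hn i j
    exact ⟨(2*(1:ℝ)) • ee n m, Or.inr (mem_pm2E m PM.one), mv_id hmi hmj _ _⟩
  · subst he
    exact ⟨(2*(1:ℝ)) • ee n j, Or.inr (mem_pm2E j PM.one), mv_flip2 hij _ hδ⟩

lemma adjust2 {n : ℕ} (hn : 3 ≤ n) {i j : Fin n} (hij : i ≠ j) {ε δ ε' δ' : ℝ}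
    (hε : PM ε) (hδ : PM δ) (hε' : PM ε') (hδ' : PM δ') :
    ∃ γ₁ ∈ pmEE n ∪ pm2E n, ∃ γ₂ ∈ pmEE n ∪ pm2E n,
      reflV γ₁ (ε • ee n i + δ • ee n j) ∈ pmEE n ∧
      reflV γ₂ (reflV γ₁ (ε • ee n i + δ • ee n j)) = ε' • ee n i + δ' • ee n j := by
  obtain ⟨γ₁, hγ₁, h1⟩ := adjust1_first hn hij hε hε' δ
  obtain ⟨γ₂, hγ₂, h2⟩ := adjust1_second hn hij hδ hδ' ε'
  exact ⟨γ₁, hγ₁, γ₂, hγ₂, by rw [h1]; exact mem_pmEE hij hε' hδ,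
    by rw [h1, h2]⟩

lemma trans_short {n : ℕ} (hn : 3 ≤ n) {α β : EuclideanSpace ℝ (Fin n)}
    (hα : α ∈ pmEE n) (hβ : β ∈ pmEE n) :
    ∃ γ₁ ∈ pmEE n ∪ pm2E n, ∃ γ₂ ∈ pmEE n ∪ pm2E n,
      reflV γ₁ α ∈ pmEE n ∧ reflV γ₂ (reflV γ₁ α) = β := by
  obtain ⟨i,j,hij,ε,δ,hε,hδ,rfl⟩ := hα
  obtain ⟨k,l,hkl,ε',δ',hε',hδ',rfl⟩ := hβ
  by_cases hki : k = i
  · subst hki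
    by_cases hlj : l = j
    · subst hlj
      exact adjust2 hn hij hε hδ hε' hδ'
    · obtain ⟨γ₂, hγ₂, h2⟩ := adjust1_first hn hkl hε hε' δ'
      refine ⟨δ • ee n j + (-δ') • ee n l,
        Or.inl (mem_pmEE (fun h => hlj h.symm) hδ (PM.neg hδ')), γ₂, hγ₂, ?_, ?_⟩
      · rw [mv_move2 hij (Ne.symm hkl) hlj hδ hδ' ε]
        exact mem_pmEE hkl hε hδ'
      · rw [mv_move2 hij (Ne.symm hkl) hlj hδ hδ' ε, h2]
  · by_cases hkj : k = j
    · subst hkj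
      by_cases hli : l = i
      · subst hli
        obtain ⟨γ₁, hγ₁, γ₂, hγ₂, hmem, heq⟩ := adjust2 hn hij hε hδ hδ' hε'
        exact ⟨γ₁, hγ₁, γ₂, hγ₂, hmem, by rw [heq]; exact add_comm _ _⟩
      · have hlk : l ≠ k := Ne.symm hkl
        obtain ⟨γ₂, hγ₂, h2⟩ := adjust1_second hn hlk hδ hε' δ'
        refine ⟨ε • ee n i + (-δ') • ee n l,
          Or.inl (mem_pmEE (fun h => hli h.symm) hε (PM.neg hδ')), γ₂, hγ₂, ?_, ?_⟩
        · rw [mv_move1 hij hli hlk hε hδ' δ]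
          exact mem_pmEE hlk hδ' hδ
        · rw [mv_move1 hij hli hlk hε hδ' δ, h2]
          exact add_comm _ _
    · by_cases hli : l = i
      · subst hli
        have hlk : l ≠ k := fun h => hki h.symm
        obtain ⟨γ₂, hγ₂, h2⟩ := adjust1_first hn hlk hε hδ' ε'
        refine ⟨δ • ee n j + (-ε') • ee n k,
          Or.inl (mem_pmEE (fun h => hkj h.symm) hδ (PM.neg hε')), γ₂, hγ₂, ?_, ?_⟩
        · rw [mv_move2 hij hki hkj hδ hε' ε]
          exact mem_pmEE hlk hε hε'
        · rw [mv_move2 hij hki hkj hδ hε' ε, h2]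
          exact add_comm _ _
      · by_cases hlj : l = j
        · subst hlj
          obtain ⟨γ₂, hγ₂, h2⟩ := adjust1_second hn hkl hδ hδ' ε'
          refine ⟨ε • ee n i + (-ε') • ee n k,
            Or.inl (mem_pmEE (fun h => hki h.symm) hε (PM.neg hε')), γ₂, hγ₂, ?_, ?_⟩
          · rw [mv_move1 hij hki hkl hε hε' δ]
            exact mem_pmEE hkl hε' hδ
          · rw [mv_move1 hij hki hkl hε hε' δ, h2]
        · refine ⟨ε • ee n i + (-ε') • ee n k,
            Or.inl (mem_pmEE (fun h => hki h.symm) hε (PM.neg hε')),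
            δ • ee n j + (-δ') • ee n l,
            Or.inl (mem_pmEE (fun h => hlj h.symm) hδ (PM.neg hδ')), ?_, ?_⟩
          · rw [mv_move1 hij hki hkj hε hε' δ]
            exact mem_pmEE hkj hε' hδ
          · rw [mv_move1 hij hki hkj hε hε' δ,
              mv_move2 hkj (Ne.symm hkl) hlj hδ hδ' ε']

lemma e1 {n : ℕ} (hn : 3 ≤ n) {β : EuclideanSpace ℝ (Fin n)} (hβ : β ∈ pmEE n) :
    ∃ γ ∈ pmEE n, ∃ β' ∈ pmEE n,
      reflV γ β = β' ∧ 2*⟪β,γ⟫/⟪γ,γ⟫ = 1 ∧ 2*⟪β',γ⟫/⟪γ,γ⟫ = -1 ∧ reflV γ β' = β := by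
  obtain ⟨i,j,hij,ε,δ,hε,hδ,rfl⟩ := hβ
  obtain ⟨m, hmi, hmj⟩ := exists_fresh hn i j
  have him : i ≠ m := Ne.symm hmi
  have hjm : j ≠ m := Ne.symm hmj
  have hγγ : ⟪ε • ee n i + (1:ℝ) • ee n m, ε • ee n i + (1:ℝ) • ee n m⟫ = 2 :=
    normSq_short him hε PM.one
  have hm1 : ⟪ε • ee n i + δ • ee n j, ε • ee n i + (1:ℝ) • ee n m⟫ = 1 := by
    rw [inner_comb]; simp [him, hjm, Ne.symm hij, PM.sq hε]
  have hm2 : ⟪δ • ee n j + (-1:ℝ) • ee n m, ε • ee n i + (1:ℝ) • ee n m⟫ = -1 := by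
    rw [inner_comb]; simp [hmi, hjm, Ne.symm hij]
  refine ⟨ε • ee n i + (1:ℝ) • ee n m, mem_pmEE him hε PM.one,
    δ • ee n j + (-1:ℝ) • ee n m, mem_pmEE hjm hδ PM.mone, ?_, ?_, ?_, ?_⟩
  · simp only [reflV]; rw [hm1, hγγ]; match_scalars <;> ring1
  · rw [hm1, hγγ]; norm_num
  · rw [hm2, hγγ]; norm_num
  · simp only [reflV]; rw [hm2, hγγ]; match_scalars <;> ring1

lemma e2 {n : ℕ} (hn : 3 ≤ n) {β : EuclideanSpace ℝ (Fin n)} (hβ : β ∈ pmEE n) :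
    ∃ α ∈ pmEE n, ∃ γ ∈ pmEE n, 2*⟪α,γ⟫/⟪γ,γ⟫ = 1 ∧ reflV γ α = β := by
  obtain ⟨i,j,hij,ε,δ,hε,hδ,rfl⟩ := hβ
  obtain ⟨m, hmi, hmj⟩ := exists_fresh hn i j
  have him : i ≠ m := Ne.symm hmi
  have hjm : j ≠ m := Ne.symm hmj
  have hγγ : ⟪(-ε) • ee n i + (1:ℝ) • ee n m, (-ε) • ee n i + (1:ℝ) • ee n m⟫ = 2 :=
    normSq_short him (PM.neg hε) PM.one
  have hm1 : ⟪δ • ee n j + (1:ℝ) • ee n m, (-ε) • ee n i + (1:ℝ) • ee n m⟫ = 1 := by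
    rw [inner_comb]; simp [hmi, hjm, Ne.symm hij]
  refine ⟨δ • ee n j + (1:ℝ) • ee n m, mem_pmEE hjm hδ PM.one,
    (-ε) • ee n i + (1:ℝ) • ee n m, mem_pmEE him (PM.neg hε) PM.one, ?_, ?_⟩
  · rw [hm1, hγγ]; norm_num
  · simp only [reflV]; rw [hm1, hγγ]; match_scalars <;> ring1

lemma e3 {n : ℕ} (hn : 3 ≤ n) {α : EuclideanSpace ℝ (Fin n)} (hα : α ∈ pm2E n) :
    ∃ β ∈ pmEE n, ∃ α' ∈ pm2E n,
      reflV β α = α' ∧ 2*⟪α,β⟫/⟪β,β⟫ = 2 ∧ 2*⟪α',β⟫/⟪β,β⟫ = -2 ∧ reflV β α' = α := by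
  obtain ⟨i,s,hs,rfl⟩ := pm2E_repr hα
  obtain ⟨m, hmi, -⟩ := exists_fresh hn i i
  have him : i ≠ m := Ne.symm hmi
  have hββ : ⟪s • ee n i + (1:ℝ) • ee n m, s • ee n i + (1:ℝ) • ee n m⟫ = 2 :=
    normSq_short him hs PM.one
  have hm1 : ⟪(2*s) • ee n i, s • ee n i + (1:ℝ) • ee n m⟫ = 2 := by
    rw [inner_comb1']; simp [hmi]
    linear_combination 2*(PM.sq hs)
  have hm2 : ⟪(2*(-1:ℝ)) • ee n m, s • ee n i + (1:ℝ) • ee n m⟫ = -2 := by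
    rw [inner_comb1']; simp [him]
  refine ⟨s • ee n i + (1:ℝ) • ee n m, mem_pmEE him hs PM.one,
    (2*(-1:ℝ)) • ee n m, mem_pm2E m PM.mone, ?_, ?_, ?_, ?_⟩
  · simp only [reflV]; rw [hm1, hββ]; match_scalars <;> ring1
  · rw [hm1, hββ]; norm_num
  · rw [hm2, hββ]; norm_num
  · simp only [reflV]; rw [hm2, hββ]; match_scalars <;> ring1

lemma e4 {n : ℕ} (hn : 3 ≤ n) {α : EuclideanSpace ℝ (Fin n)} (hα : α ∈ pm2E n) :
    ∃ β ∈ pmEE n, 2*⟪β,α⟫/⟪α,α⟫ = 1 ∧ reflV α β ∈ pmEE n := by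
  obtain ⟨i,s,hs,rfl⟩ := pm2E_repr hα
  obtain ⟨m, hmi, -⟩ := exists_fresh hn i i
  have him : i ≠ m := Ne.symm hmi
  have hαα : ⟪(2*s) • ee n i, (2*s) • ee n i⟫ = 4 := normSq_long i hs
  have hm1 : ⟪s • ee n i + (1:ℝ) • ee n m, (2*s) • ee n i⟫ = 2 := by
    rw [inner_comb1]; simp [hmi]
    linear_combination 2*(PM.sq hs)
  refine ⟨s • ee n i + (1:ℝ) • ee n m, mem_pmEE him hs PM.one, ?_, ?_⟩
  · rw [hm1, hαα]; norm_num
  · have hv : reflV ((2*s) • ee n i) (s • ee n i + (1:ℝ) • ee n m)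
        = (-s) • ee n i + (1:ℝ) • ee n m := by
      simp only [reflV]; rw [hm1, hαα]; match_scalars <;> ring1
    rw [hv]; exact mem_pmEE him (PM.neg hs) PM.one

lemma reflA_pair {V Y : Type*} [NormedAddCommGroup V] [InnerProductSpace ℝ V]
    [AddCommGroup Y] [Module ℝ Y] (α : V) (lam : Y) (β : V) (mu : Y) :
    reflA (α, lam) (β, mu) = (reflV α β, mu - (2*⟪β,α⟫/⟪α,α⟫) • lam) := rfl

lemma reflA_eq {V Y : Type*} [NormedAddCommGroup V] [InnerProductSpace ℝ V]
    [AddCommGroup Y] [Module ℝ Y] (a b : V × Y) :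
    reflA a b = (reflV a.1 b.1, b.2 - (2*⟪b.1,a.1⟫/⟪a.1,a.1⟫) • a.2) := rfl

lemma two_nsmul_helper {Y : Type*} [AddCommGroup Y] (k : ℤ) (a x : Y) :
    x - (2*k) • a = x + 2 • ((-k) • a) := by
  have h1 : (2:ℕ) • ((-k) • a) = (2:ℤ) • ((-k) • a) := by
    rw [← natCast_zsmul]; norm_num
  rw [h1, ← mul_smul]
  have h2 : (2:ℤ) * (-k) = -(2*k) := by ring
  rw [h2, neg_smul, ← sub_eq_add_neg]

/-- gradient `C_n`, `n ≥ 3`: if `H` is a maximal proper additive subgroup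
of `Λ_s` with `2Λ_s + H = Λ_s`, and `p` is ℤ-linear with `p(α) ∈ Λ_s` for short `α` and
`p(α) ∈ Λ_ℓ` for long `α`, then
`Ψ = {(α, p(α)+h) : α short, h ∈ H} ∪ {(α, μ) : α long, μ ∈ (p(α)+H) ∩ Λ_ℓ}`
is a maximal root subsystem. -/
theorem stmt_6 (n : ℕ) (hn : 3 ≤ n) (Y : Type*) [AddCommGroup Y] [Module ℝ Y]
    [FiniteDimensional ℝ Y]
    (Λs : AddSubgroup Y) (hspan : Submodule.span ℝ (Λs : Set Y) = ⊤)
    (Λℓ : Set Y) (h0ℓ : (0 : Y) ∈ Λℓ) (hℓs : Λℓ ⊆ (Λs : Set Y))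
    (hℓneg : ∀ x ∈ Λℓ, -x ∈ Λℓ)
    (hℓ2 : ∀ x ∈ Λℓ, ∀ y ∈ Λs, x + 2 • y ∈ Λℓ)
    (Φ : Set (EuclideanSpace ℝ (Fin n) × Y))
    (hΦ : Φ = {x | x.1 ∈ pmEE n ∧ x.2 ∈ Λs} ∪ {x | x.1 ∈ pm2E n ∧ x.2 ∈ Λℓ})
    (H : AddSubgroup Y) (hHle : H ≤ Λs) (hHne : H ≠ Λs)
    (hHmax : ∀ N : AddSubgroup Y, H ≤ N → N ≤ Λs → N = H ∨ N = Λs)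
    (hsum : {y | ∃ x ∈ Λs, ∃ h ∈ H, y = 2 • x + h} = (Λs : Set Y))
    (p : EuclideanSpace ℝ (Fin n) → Y)
    (hlin : IsZLin (pmEE n ∪ pm2E n) p)
    (hps : ∀ α ∈ pmEE n, p α ∈ Λs)
    (hpl : ∀ α ∈ pm2E n, p α ∈ Λℓ)
    (Ψ : Set (EuclideanSpace ℝ (Fin n) × Y))
    (hΨ : Ψ = {x | ∃ α ∈ pmEE n, ∃ h ∈ H, x = (α, p α + h)} ∪
      {x | x.1 ∈ pm2E n ∧ x.2 ∈ Λℓ ∧ ∃ h ∈ H, x.2 = p x.1 + h}) :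
    IsMaximalRootSubsystem reflA Φ Ψ := by
  have hpΛ : ∀ γ ∈ pmEE n ∪ pm2E n, p γ ∈ Λs := by
    rintro γ (hγ|hγ)
    exacts [hps γ hγ, hℓs (hpl γ hγ)]
  have memS : ∀ {γ : EuclideanSpace ℝ (Fin n)} {h : Y}, γ ∈ pmEE n → h ∈ H →
      (γ, p γ + h) ∈ Ψ := by
    intro γ h hγ hh; rw [hΨ]; exact Or.inl ⟨γ, hγ, h, hh, rfl⟩
  have memL : ∀ {γ : EuclideanSpace ℝ (Fin n)} {μ : Y}, γ ∈ pm2E n → μ ∈ Λℓ →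
      (∃ h ∈ H, μ = p γ + h) → (γ, μ) ∈ Ψ := by
    intro γ μ h1 h2 h3; rw [hΨ]; exact Or.inr ⟨h1, h2, h3⟩
  have wΨ : ∀ γ ∈ pmEE n ∪ pm2E n, (γ, p γ) ∈ Ψ := by
    rintro γ (hγ|hγ)
    · have := memS hγ H.zero_mem; rwa [add_zero] at this
    · exact memL hγ (hpl γ hγ) ⟨0, H.zero_mem, (add_zero _).symm⟩
  have extract : ∀ a ∈ Ψ, ∃ γ h, (γ ∈ pmEE n ∪ pm2E n) ∧ h ∈ H ∧ a = (γ, p γ + h) ∧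
      (γ ∈ pm2E n → p γ + h ∈ Λℓ) := by
    intro a ha; rw [hΨ] at ha
    rcases ha with ⟨γ, hγ, h, hh, rfl⟩ | ⟨h1, h2, h, hh, heq⟩
    · exact ⟨γ, h, Or.inl hγ, hh, rfl, fun hl => absurd hl (short_not_long hγ)⟩
    · refine ⟨a.1, h, Or.inr h1, hh, ?_, fun _ => ?_⟩
      · rw [← heq]
      · rw [← heq]; exact h2
  have key : ∀ (γ β : EuclideanSpace ℝ (Fin n)) (h h' : Y), γ ∈ pmEE n ∪ pm2E n →
      β ∈ pmEE n ∪ pm2E n → h ∈ H → h' ∈ H → (β ∈ pm2E n → p β + h' ∈ Λℓ) →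
      reflA (γ, p γ + h) (β, p β + h') ∈ Ψ := by
    intro γ β h h' hγ hβ hh hh' hℓl
    rcases hβ with hβs | hβl
    · obtain ⟨k, hk, hr⟩ : ∃ k:ℤ, 2*⟪β,γ⟫/⟪γ,γ⟫ = (k:ℝ) ∧ reflV γ β ∈ pmEE n := by
        rcases hγ with hγs | hγl
        exacts [cartan_ss hγs hβs, cartan_ls hγl hβs]
      have hp' : p (reflV γ β) = p β - (k:ℝ) • p γ := by
        rw [hlin γ hγ β (Or.inl hβs), hk]
      have hsec : (p β + h') - (2*⟪β,γ⟫/⟪γ,γ⟫) • (p γ + h)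
          = p (reflV γ β) + (h' - k • h) := by
        rw [hk, hp', smul_add, Int.cast_smul_eq_zsmul ℝ k h]
        abel
      rw [reflA_pair, hsec]
      exact memS hr (H.sub_mem hh' (H.zsmul_mem hh k))
    · obtain ⟨k, hk, hr⟩ : ∃ k:ℤ, 2*⟪β,γ⟫/⟪γ,γ⟫ = ((2*k:ℤ):ℝ) ∧ reflV γ β ∈ pm2E n := by
        rcases hγ with hγs | hγl
        exacts [cartan_sl hγs hβl, cartan_ll hγl hβl]
      have hμ := hℓl hβl
      have hp' : p (reflV γ β) = p β - ((2*k:ℤ):ℝ) • p γ := by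
        rw [hlin γ hγ β (Or.inr hβl), hk]
      have hsec : (p β + h') - (2*⟪β,γ⟫/⟪γ,γ⟫) • (p γ + h)
          = p (reflV γ β) + (h' - (2*k) • h) := by
        rw [hk, hp', smul_add, Int.cast_smul_eq_zsmul ℝ (2*k) h]
        abel
      have hlam : p γ + h ∈ Λs := Λs.add_mem (hpΛ γ hγ) (hHle hh)
      have hsec2 : (p β + h') - (2*⟪β,γ⟫/⟪γ,γ⟫) • (p γ + h)
          = (p β + h') + 2 • ((-k) • (p γ + h)) := by
        rw [hk, Int.cast_smul_eq_zsmul ℝ (2*k) (p γ + h), two_nsmul_helper]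
      rw [reflA_pair]
      refine memL hr ?_ ⟨h' - (2*k) • h, H.sub_mem hh' (H.zsmul_mem hh (2*k)), hsec⟩
      rw [hsec2]
      exact hℓ2 _ hμ _ (Λs.zsmul_mem hlam (-k))
  -- a fixed short root
  have h01 : (⟨0, by omega⟩ : Fin n) ≠ ⟨1, by omega⟩ := by
    intro h; simp [Fin.mk.injEq] at h
  set α₀ : EuclideanSpace ℝ (Fin n) :=
    (1:ℝ) • ee n ⟨0, by omega⟩ + (1:ℝ) • ee n ⟨1, by omega⟩ with hα₀def
  have hα₀ : α₀ ∈ pmEE n := mem_pmEE h01 PM.one PM.one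
  have hsubsystem : IsRootSubsystem reflA Φ Ψ := by
    refine ⟨⟨(α₀, p α₀), wΨ α₀ (Or.inl hα₀)⟩, ?_, ?_⟩
    · intro x hx; rw [hΨ] at hx; rw [hΦ]
      rcases hx with ⟨γ, hγ, h, hh, rfl⟩ | ⟨h1, h2, _⟩
      · exact Or.inl ⟨hγ, Λs.add_mem (hps γ hγ) (hHle hh)⟩
      · exact Or.inr ⟨h1, h2⟩
    · intro a ha b hb
      obtain ⟨γ, h, hγ, hh, rfl, -⟩ := extract a ha
      obtain ⟨β, h', hβ, hh', rfl, hβl⟩ := extract b hb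
      exact key γ β h h' hγ hβ hh hh' hβl
  have hneq : Ψ ≠ Φ := by
    have hy : ∃ y ∈ Λs, y ∉ H := by
      by_contra hcon; push_neg at hcon
      exact hHne (le_antisymm hHle hcon)
    obtain ⟨y, hyΛ, hyH⟩ := hy
    intro heq
    have hmem : (α₀, p α₀ + y) ∈ Φ := by
      rw [hΦ]; exact Or.inl ⟨hα₀, Λs.add_mem (hps _ hα₀) hyΛ⟩
    rw [← heq, hΨ] at hmem
    rcases hmem with ⟨γ, hγ, h, hh, hEq⟩ | ⟨h1, -, -⟩
    · have h1 := congrArg Prod.fst hEq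
      have h2 := congrArg Prod.snd hEq
      simp only at h1 h2
      rw [← h1] at h2
      have h3 : y = h := add_left_cancel h2
      exact hyH (h3.symm ▸ hh)
    · exact short_not_long hα₀ h1
  refine ⟨hsubsystem, hneq, ?_⟩
  intro Ψ' hΨ'sub hΨΨ' hΨ'ne
  obtain ⟨hΨ'ne', hΨ'Φ, hΨ'cl⟩ := hΨ'sub
  by_contra hne
  have transport : ∀ (β : EuclideanSpace ℝ (Fin n)) (z : Y), β ∈ pmEE n →
      (β, p β + z) ∈ Ψ' → ∀ γ ∈ pmEE n ∪ pm2E n,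
      (reflV γ β, p (reflV γ β) + z) ∈ Ψ' := by
    intro β z hβ hb γ hγ
    have hw : (γ, p γ) ∈ Ψ' := hΨΨ' (wΨ γ hγ)
    have hres := hΨ'cl _ hw _ hb
    have heq2 : reflA (γ, p γ) (β, p β + z) = (reflV γ β, p (reflV γ β) + z) := by
      rw [reflA_pair]
      congr 1
      rw [hlin γ hγ β (Or.inl hβ)]
      abel
    rwa [heq2] at hres
  have seed : ∃ β₀ ∈ pmEE n, ∃ z₀ ∈ Λs, z₀ ∉ (H : Set Y) ∧ (β₀, p β₀ + z₀) ∈ Ψ' := by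
    have hx : ∃ x ∈ Ψ', x ∉ Ψ := by
      by_contra hcon; push_neg at hcon
      exact hne (Set.Subset.antisymm hcon hΨΨ')
    obtain ⟨x, hxΨ', hxΨ⟩ := hx
    have hxΦ := hΨ'Φ hxΨ'
    rw [hΦ] at hxΦ
    rcases hxΦ with ⟨h1, h2⟩ | ⟨h1, h2⟩
    · refine ⟨x.1, h1, x.2 - p x.1, Λs.sub_mem h2 (hps _ h1), ?_, ?_⟩
      · intro hH
        apply hxΨ; rw [hΨ]; left
        exact ⟨x.1, h1, x.2 - p x.1, hH, by rw [add_sub_cancel]⟩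
      · have hmk : (x.1, p x.1 + (x.2 - p x.1)) = x := by
          rw [add_sub_cancel]
        rw [hmk]; exact hxΨ'
    · have hnH : ¬ ∃ h ∈ H, x.2 = p x.1 + h := by
        intro ⟨h, hh, hEq⟩
        exact hxΨ (by rw [hΨ]; exact Or.inr ⟨h1, h2, h, hh, hEq⟩)
      obtain ⟨β, hβ, hc, hr⟩ := e4 hn h1
      have hw : (β, p β) ∈ Ψ' := hΨΨ' (wΨ β (Or.inl hβ))
      have hres := hΨ'cl x hxΨ' _ hw
      have hEq : reflA x (β, p β) = (reflV x.1 β, p (reflV x.1 β) + (p x.1 - x.2)) := by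
        rw [reflA_eq]
        congr 1
        rw [hlin x.1 (Or.inr h1) β (Or.inl hβ), hc]
        simp only [one_smul]
        abel
      refine ⟨reflV x.1 β, hr, p x.1 - x.2, Λs.sub_mem (hℓs (hpl _ h1)) (hℓs h2), ?_, ?_⟩
      · intro hH
        exact hnH ⟨-(p x.1 - x.2), H.neg_mem hH, by abel⟩
      · rw [← hEq]; exact hres
  obtain ⟨β₀, hβ₀, z₀, hz₀Λ, hz₀H, hseed⟩ := seed
  have transportAll : ∀ z : Y, (∃ β ∈ pmEE n, (β, p β + z) ∈ Ψ') →
      ∀ β' ∈ pmEE n, (β', p β' + z) ∈ Ψ' := by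
    rintro z ⟨β, hβ, hb⟩ β' hβ'
    obtain ⟨γ₁, hγ₁, γ₂, hγ₂, hint, heq⟩ := trans_short hn hβ hβ'
    have h1 := transport β z hβ hb γ₁ hγ₁
    have h2 := transport _ z hint h1 γ₂ hγ₂
    rwa [heq] at h2
  let K : AddSubgroup Y :=
    { carrier := {z | z ∈ Λs ∧ ∀ β ∈ pmEE n, (β, p β + z) ∈ Ψ'}
      zero_mem' := ⟨Λs.zero_mem, fun β hβ => by
        rw [add_zero]; exact hΨΨ' (wΨ β (Or.inl hβ))⟩
      add_mem' := by
        rintro z z' ⟨hzΛ, hz⟩ ⟨hz'Λ, hz'⟩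
        refine ⟨Λs.add_mem hzΛ hz'Λ, ?_⟩
        intro β hβ
        obtain ⟨γ, hγ, β', hβ', hrv, hc1, hc2, hrv2⟩ := e1 hn hβ
        have h1 := transport β z hβ (hz β hβ) γ (Or.inl hγ)
        rw [hrv] at h1
        have h2 := hΨ'cl (γ, p γ + z') (hz' γ hγ) _ h1
        have hEq : reflA (γ, p γ + z') (β', p β' + z) = (β, p β + (z + z')) := by
          rw [reflA_pair, hc2]
          have hp1 : p β' = p β - p γ := by
            rw [← hrv, hlin γ (Or.inl hγ) β (Or.inl hβ), hc1, one_smul]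
          rw [hrv2, hp1, neg_one_smul]
          congr 1
          abel
        rwa [hEq] at h2
      neg_mem' := by
        rintro z ⟨hzΛ, hz⟩
        refine ⟨Λs.neg_mem hzΛ, ?_⟩
        intro β hβ
        obtain ⟨α, hα, γ, hγ, hc, hrv⟩ := e2 hn hβ
        have hw : (α, p α) ∈ Ψ' := hΨΨ' (wΨ α (Or.inl hα))
        have h1 := hΨ'cl (γ, p γ + z) (hz γ hγ) _ hw
        have hEq : reflA (γ, p γ + z) (α, p α) = (β, p β + -z) := by
          rw [reflA_pair, hc]
          have hp1 : p β = p α - p γ := by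
            rw [← hrv, hlin γ (Or.inl hγ) α (Or.inl hα), hc, one_smul]
          rw [hrv, hp1, one_smul]
          congr 1
          abel
        rwa [hEq] at h1 }
  have hHK : H ≤ K := fun h hh => ⟨hHle hh, fun β hβ => hΨΨ' (memS hβ hh)⟩
  have hKΛ : K ≤ Λs := fun z hz => hz.1
  have hzK : z₀ ∈ K := ⟨hz₀Λ, transportAll z₀ ⟨β₀, hβ₀, hseed⟩⟩
  have hKeq : K = Λs := by
    rcases hHmax K hHK hKΛ with hEq | hEq
    · exact absurd (hEq ▸ hzK) hz₀H
    · exact hEq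
  have allshort : ∀ β ∈ pmEE n, ∀ ν ∈ Λs, ((β, ν) : EuclideanSpace ℝ (Fin n) × Y) ∈ Ψ' := by
    intro β hβ ν hν
    have hzmem : ν - p β ∈ K := by
      rw [hKeq]; exact Λs.sub_mem hν (hps β hβ)
    have := hzmem.2 β hβ
    rwa [add_sub_cancel] at this
  have alllong : ∀ (γ : EuclideanSpace ℝ (Fin n)) (μ : Y), γ ∈ pm2E n → μ ∈ Λℓ →
      (γ, μ) ∈ Ψ' := by
    intro γ μ hγ hμ
    have hd : μ - p γ ∈ {y | ∃ x ∈ Λs, ∃ h ∈ H, y = 2 • x + h} := by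
      rw [hsum]; exact Λs.sub_mem (hℓs hμ) (hℓs (hpl γ hγ))
    obtain ⟨x, hx, h, hh, hxh⟩ := hd
    have hμeq : μ = p γ + (2 • x + h) := by rw [← hxh]; abel
    have hμ'Λ : p γ + h ∈ Λℓ := by
      have h1 : p γ + h = μ + 2 • (-x) := by rw [hμeq, smul_neg]; abel
      rw [h1]; exact hℓ2 μ hμ (-x) (Λs.neg_mem hx)
    have hbase : (γ, p γ + h) ∈ Ψ' := hΨΨ' (memL hγ hμ'Λ ⟨h, hh, rfl⟩)
    obtain ⟨β, hβ, γ', hγ', hrv, hc1, hc2, hrv2⟩ := e3 hn hγ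
    have hw : (β, p β) ∈ Ψ' := hΨΨ' (wΨ β (Or.inl hβ))
    have h1 := hΨ'cl (β, p β) hw _ hbase
    have hEq1 : reflA (β, p β) (γ, p γ + h) = (γ', (p γ + h) - (2:ℝ) • p β) := by
      rw [reflA_pair, hc1, hrv]
    rw [hEq1] at h1
    have hw2 : (β, p β + x) ∈ Ψ' := allshort β hβ _ (Λs.add_mem (hps β hβ) hx)
    have h2 := hΨ'cl (β, p β + x) hw2 _ h1
    have hEq2 : reflA (β, p β + x) (γ', (p γ + h) - (2:ℝ) • p β) = (γ, μ) := by
      rw [reflA_pair, hc2, hrv2]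
      congr 1
      have hns : (2:ℕ) • x = (2:ℝ) • x := by
        rw [← Nat.cast_smul_eq_nsmul ℝ 2 x]; norm_num
      rw [hμeq, hns]
      module
    rw [hEq2] at h2
    exact h2
  apply hΨ'ne
  apply Set.Subset.antisymm hΨ'Φ
  intro x' hx'
  rw [hΦ] at hx'
  rcases hx' with ⟨h1, h2⟩ | ⟨h1, h2⟩
  · have := allshort x'.1 h1 x'.2 h2
    rwa [Prod.mk.eta] at this
  · have := alllong x'.1 x'.2 h1 h2
    rwa [Prod.mk.eta] at this
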